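/- The braid group B₃ = ⟨a, b | aba = bab⟩ is not co-Hopfian: there exists an injective endomorphism of B₃ that is not surjective. -/
import Mathlib


/-- The single braid relation `a * b * a = b * a * b` on two generators
(encoded as `true`, `false`), presenting the braid group `B₃`. -/
def B3Rels : Set (FreeGroup Bool) :=
  {FreeGroup.of true * FreeGroup.of false * FreeGroup.of true *
    (FreeGroup.of false * FreeGroup.of true * FreeGroup.of false)⁻¹}

/-- The braid group `B₃ = ⟨a, b ∣ aba = bab⟩`. -/
abbrev B3 : Type := PresentedGroup B3Rels

namespace B3Aux

def a : B3 := PresentedGroup.of true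
def b : B3 := PresentedGroup.of false

lemma rel : a * b * a = b * a * b := by
  have h : (PresentedGroup.mk B3Rels
      (FreeGroup.of true * FreeGroup.of false * FreeGroup.of true *
        (FreeGroup.of false * FreeGroup.of true * FreeGroup.of false)⁻¹)) = 1 := by
    apply (QuotientGroup.eq_one_iff _).mpr
    exact Subgroup.subset_normalClosure rfl
  rw [map_mul, map_inv] at h
  have := mul_inv_eq_one.mp h
  simpa [a, b, PresentedGroup.of] using this

/-- Δ = aba -/
def Δ : B3 := a * b * a

lemma Δa : Δ * a = b * Δ := by
  simp only [Δ]
  have h : b * (a * b * a) = b * a * b * a := by group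
  rw [h, ← rel]

lemma Δb : Δ * b = a * Δ := by
  simp only [Δ]
  have h : a * b * a * b = a * (b * a * b) := by group
  rw [h, ← rel]

/-- The central element z = Δ². -/
def z : B3 := Δ * Δ

lemma za : z * a = a * z := by
  simp only [z]
  rw [mul_assoc, Δa, ← mul_assoc, Δb, mul_assoc]

lemma zb : z * b = b * z := by
  simp only [z]
  rw [mul_assoc, Δb, ← mul_assoc, Δa, mul_assoc]

lemma z_comm (g : B3) : Commute z g := by
  have : g ∈ Subgroup.centralizer {z} := by
    refine PresentedGroup.generated_by _ _ ?_ g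
    intro j
    rcases j with _ | _
    · intro x hx; rcases hx with rfl; exact zb
    · intro x hx; rcases hx with rfl; exact za
  exact Subgroup.mem_centralizer_iff.mp this z rfl

/-- The exponent-sum homomorphism. -/
def degF : B3 →* Multiplicative ℤ :=
  PresentedGroup.toGroup (f := fun _ => Multiplicative.ofAdd (1 : ℤ)) (by
    intro r hr
    rcases hr with rfl
    simp only [map_mul, map_inv, FreeGroup.lift_apply_of]
    group)

def deg (g : B3) : ℤ := Multiplicative.toAdd (degF g)

lemma deg_mul (g h : B3) : deg (g * h) = deg g + deg h := by
  simp [deg, map_mul]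

lemma deg_one : deg (1 : B3) = 0 := by simp [deg]

lemma deg_a : deg a = 1 := by
  simp [deg, degF, a, PresentedGroup.toGroup.of]

lemma deg_b : deg b = 1 := by
  simp [deg, degF, b, PresentedGroup.toGroup.of]

lemma deg_z : deg z = 6 := by
  simp [z, Δ, deg_mul, deg_a, deg_b]

/-- The endomorphism g ↦ g * z ^ deg g. -/
def ψ : B3 →* B3 where
  toFun g := g * z ^ (deg g)
  map_one' := by simp [deg_one]
  map_mul' g h := by
    show (g * h) * z ^ deg (g * h) = (g * z ^ deg g) * (h * z ^ deg h)
    rw [deg_mul, zpow_add]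
    have hc : Commute (z ^ deg g) h := (z_comm h).zpow_left _
    rw [mul_assoc, mul_assoc, ← mul_assoc (z ^ deg g), hc.eq, mul_assoc]

lemma deg_ψ (g : B3) : deg (ψ g) = 7 * deg g := by
  have : deg (z ^ deg g) = 6 * deg g := by
    simp [deg, map_zpow]
    rw [show (Multiplicative.toAdd (degF z)) = 6 from deg_z]; ring
  simp only [ψ, MonoidHom.coe_mk, OneHom.coe_mk, deg_mul, this]; ring

lemma ψ_inj : Function.Injective ψ := by
  rw [injective_iff_map_eq_one]
  intro g hg
  have hd : 7 * deg g = 0 := by rw [← deg_ψ, hg, deg_one]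
  have hd0 : deg g = 0 := by omega
  have : ψ g = g := by simp [ψ, hd0]
  rwa [this] at hg

lemma ψ_not_surj : ¬ Function.Surjective ψ := by
  intro hs
  obtain ⟨g, hg⟩ := hs a
  have : 7 * deg g = 1 := by rw [← deg_ψ, hg, deg_a]
  omega

end B3Aux

/-- The braid group `B₃` is not co-Hopfian: there exists an injective
endomorphism of `B₃` that is not surjective. -/
theorem stmt2 : ∃ φ : B3 →* B3, Function.Injective φ ∧ ¬ Function.Surjective φ := by
  exact ⟨B3Aux.ψ, B3Aux.ψ_inj, B3Aux.ψ_not_surj⟩
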